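/- Let G be a finite group and H, K ≤ G subgroups with inclusions i: H → G and j: K → G. Then the isocomma groupoid (i/j) is equivalent to the disjoint union, over a set of representatives x of the double cosets K\G/H, of the groups K ∩ xHx⁻¹ (viewed as one-object groupoids). -/

import Mathlib

open CategoryTheory

section Aux

variable {G : Type*} [Group G] (H K : Subgroup G)

/-- The isocomma groupoid of the inclusions of `H` and `K` into `G`. -/
abbrev IsoComma :=
  Comma (SingleObj.mapHom H G H.subtype) (SingleObj.mapHom K G K.subtype)

/-- The object of the isocomma groupoid given by `r : G`. -/
def baseObj (r : G) : IsoComma H K where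
  left := SingleObj.star H
  right := SingleObj.star K
  hom := (r : G)

/-- The endomorphism of `baseObj r` coming from `u ∈ K ∩ rHr⁻¹`. -/
def mapAux (r : G) (u : ↥(K ⊓ Subgroup.map (MulAut.conj r).toMonoidHom H : Subgroup G)) :
    baseObj H K r ⟶ baseObj H K r where
  left := ⟨r⁻¹ * (u : G) * r, by
    have := Subgroup.mem_map_equiv.mp u.2.2
    simpa [mul_assoc] using this⟩
  right := ⟨(u : G), u.2.1⟩
  w := by
    show (r : G) * (r⁻¹ * (u : G) * r) = (u : G) * r
    group

lemma mapAux_one (r : G) : mapAux H K r 1 = 𝟙 (baseObj H K r) := by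
  apply CommaMorphism.ext <;> apply Subtype.ext
  · show r⁻¹ * ((1 : ↥(K ⊓ _)) : G) * r = 1
    simp
  · rfl

lemma mapAux_mul (r : G) (u v : ↥(K ⊓ Subgroup.map (MulAut.conj r).toMonoidHom H : Subgroup G)) :
    mapAux H K r (v * u) = mapAux H K r u ≫ mapAux H K r v := by
  apply CommaMorphism.ext <;> apply Subtype.ext
  · show r⁻¹ * ((v * u : ↥(K ⊓ _)) : G) * r = (r⁻¹ * (v : G) * r) * (r⁻¹ * (u : G) * r)
    push_cast
    group
  · rfl

/-- The functor from the one-object groupoid on `K ∩ rHr⁻¹` to the isocomma groupoid. -/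
def toComma (r : G) :
    SingleObj (K ⊓ Subgroup.map (MulAut.conj r).toMonoidHom H : Subgroup G) ⥤ IsoComma H K where
  obj _ := baseObj H K r
  map u := mapAux H K r u
  map_id _ := mapAux_one H K r
  map_comp u v := mapAux_mul H K r u v

variable (R : Finset G)

/-- The functor from the disjoint union of one-object groupoids to the isocomma groupoid. -/
def bigFunctor :
    (Σ r : {x // x ∈ R},
        SingleObj (K ⊓ Subgroup.map (MulAut.conj (r : G)).toMonoidHom H : Subgroup G)) ⥤
      IsoComma H K :=
  Sigma.desc fun r => toComma H K (r : G)

end Aux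

/-- Let `G` be a finite group and `H, K ≤ G` subgroups with inclusions
`i : H → G`, `j : K → G`, regarded as functors of one-object groupoids.  Then for any
set `R` of representatives of the double cosets `K\G/H`, the isocomma groupoid
`(i/j)` (the comma category `Comma i j`, all of whose morphisms are invertible since
we are in groupoids) is equivalent to the disjoint union, over `x ∈ R`, of the
groups `K ∩ xHx⁻¹` viewed as one-object groupoids. -/
theorem statement0 (G : Type*) [Group G] [Finite G] (H K : Subgroup G)
    (R : Finset G)
    (hR : ∀ g : G, ∃! r, r ∈ R ∧ g ∈ DoubleCoset.doubleCoset r (K : Set G) (H : Set G)) :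
    Nonempty
      (Comma (SingleObj.mapHom H G H.subtype) (SingleObj.mapHom K G K.subtype) ≌
        (Σ r : {x // x ∈ R},
          SingleObj (K ⊓ Subgroup.map (MulAut.conj (r : G)).toMonoidHom H : Subgroup G))) := by
  classical
  have hfaith : (bigFunctor H K R).Faithful := by
    constructor
    intro X Y f g h
    change Sigma.SigmaHom X Y at f g
    cases f with
    | mk f' =>
      cases g with
      | mk g' =>
        congr 1
        apply Subtype.ext
        exact congrArg (fun ψ => Subtype.val ψ.right) h
  have hfull : (bigFunctor H K R).Full := by
    constructor
    rintro ⟨r, ptX⟩ ⟨r', ptY⟩ φ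
    have hw : (r' : G) * (φ.left).val = (φ.right).val * (r : G) := φ.w
    have hmem : (r' : G) ∈ DoubleCoset.doubleCoset (r : G) (K : Set G) (H : Set G) := by
      refine DoubleCoset.mem_doubleCoset.mpr ⟨(φ.right).val, φ.right.2, ((φ.left).val)⁻¹,
        H.inv_mem φ.left.2, ?_⟩
      rw [← hw]
      group
    have hrr : (r : G) = (r' : G) :=
      ((hR (r' : G)).unique ⟨r.2, hmem⟩ ⟨r'.2, DoubleCoset.mem_doubleCoset_self _ _ _⟩)
    obtain rfl : r = r' := Subtype.ext hrr
    refine ⟨Sigma.SigmaHom.mk (⟨(φ.right).val, φ.right.2,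
      ⟨(φ.left).val, φ.left.2, ?_⟩⟩ :
        ↥(K ⊓ Subgroup.map (MulAut.conj (r : G)).toMonoidHom H : Subgroup G)), ?_⟩
    · show (r : G) * (φ.left).val * (r : G)⁻¹ = (φ.right).val
      rw [hw]
      group
    · apply CommaMorphism.ext <;> apply Subtype.ext
      · show (r : G)⁻¹ * (φ.right).val * (r : G) = (φ.left).val
        rw [mul_assoc, ← hw]
        group
      · rfl
  have hess : (bigFunctor H K R).EssSurj := by
    constructor
    intro X
    obtain ⟨r, ⟨hrR, hgd⟩, -⟩ := hR (X.hom : G)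
    obtain ⟨k, hk, h, hh, hX⟩ := DoubleCoset.mem_doubleCoset.mp hgd
    refine ⟨⟨⟨r, hrR⟩, SingleObj.star _⟩, ⟨?_⟩⟩
    refine ⟨⟨(⟨h⁻¹, H.inv_mem hh⟩ : H), (⟨k, hk⟩ : K), ?_⟩,
      ⟨(⟨h, hh⟩ : H), (⟨k⁻¹, K.inv_mem hk⟩ : K), ?_⟩, ?_, ?_⟩
    · show (X.hom : G) * h⁻¹ = k * r
      rw [hX]; group
    · show r * h = k⁻¹ * (X.hom : G)
      rw [hX]; group
    · apply CommaMorphism.ext <;> apply Subtype.ext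
      · show h * h⁻¹ = 1
        group
      · show k⁻¹ * k = 1
        group
    · apply CommaMorphism.ext <;> apply Subtype.ext
      · show h⁻¹ * h = 1
        group
      · show k * k⁻¹ = 1
        group
  haveI := hfaith; haveI := hfull; haveI := hess
  haveI : (bigFunctor H K R).IsEquivalence := { }
  exact ⟨(bigFunctor H K R).asEquivalence.symm⟩
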